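/- Consider a convex polyhedron in R^3 evolving under constant normal speeds of its supporting planes. The polyhedron degenerates in finite time if and only if one of the following holds: (1) two faces with antiparallel normals have supporting-plane distance vanishing in finite time; (2) three faces whose normals are all orthogonal to some common line form a triangular-prism surface whose cross-sectional triangle degenerates in finite time; (3) four faces whose supporting planes form a tetrahedron degenerating to zero volume in finite time. -/

import Mathlib

open RealInnerProductSpace


lemma aux_interior_halfspace {E : Type*} [NormedAddCommGroup E] [InnerProductSpace ℝ E]
    {m : E} (hm : m ≠ 0) (a : ℝ) :
    interior {x : E | ⟪x, m⟫ ≤ a} = {x : E | ⟪x, m⟫ < a} := by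
  have hne : innerSL ℝ m ≠ 0 := by
    intro h
    apply hm
    have h2 : ⟪m, m⟫ = (0 : ℝ) := by simpa using congrArg (fun f => f m) h
    exact inner_self_eq_zero.mp h2
  have hset : {x : E | ⟪x, m⟫ ≤ a} = (innerSL ℝ m) ⁻¹' Set.Iic a := by
    ext x; simp [real_inner_comm]
  have hset2 : {x : E | ⟪x, m⟫ < a} = (innerSL ℝ m) ⁻¹' Set.Iio a := by
    ext x; simp [real_inner_comm]
  rw [hset, hset2, ← ((innerSL ℝ m).isOpenMap_of_ne_zero hne).preimage_interior_eq_interior_preimage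
    (innerSL ℝ m).continuous, interior_Iic]

local notation "E3" => EuclideanSpace ℝ (Fin 3)

lemma aux_key {ι : Type*} (n : ι → E3) (a : ι → ℝ) (hunit : ∀ i, ‖n i‖ = 1)
    (S : Finset ι) (hS : (⋂ i ∈ S, {x : E3 | ⟪x, n i⟫ < a i}) = ∅) :
    (∃ f₁ f₂, n f₂ = -n f₁ ∧ a f₁ + a f₂ ≤ 0) ∨
    (∃ f₁ f₂ f₃, (∃ u : E3, u ≠ 0 ∧ ⟪u, n f₁⟫ = 0 ∧ ⟪u, n f₂⟫ = 0 ∧ ⟪u, n f₃⟫ = 0) ∧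
       {x : E3 | ⟪x, n f₁⟫ < a f₁ ∧ ⟪x, n f₂⟫ < a f₂ ∧ ⟪x, n f₃⟫ < a f₃} = ∅) ∨
    (∃ f₁ f₂ f₃ f₄,
       ({v : E3 | ⟪v, n f₁⟫ ≤ 0 ∧ ⟪v, n f₂⟫ ≤ 0 ∧ ⟪v, n f₃⟫ ≤ 0 ∧ ⟪v, n f₄⟫ ≤ 0} = {0}) ∧
       {x : E3 | ⟪x, n f₁⟫ < a f₁ ∧ ⟪x, n f₂⟫ < a f₂ ∧ ⟪x, n f₃⟫ < a f₃ ∧ ⟪x, n f₄⟫ < a f₄} = ∅) := by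
  classical
  have hfin : Module.finrank ℝ E3 = 3 := finrank_euclideanSpace_fin
  have hnn : ∀ i, n i ≠ 0 := fun i => by
    intro h; have := hunit i; rw [h, norm_zero] at this; norm_num at this
  have hself : ∀ i, ⟪n i, n i⟫ = (1:ℝ) := fun i => by
    rw [real_inner_self_eq_norm_sq, hunit i]; norm_num
  -- a single open halfspace is nonempty
  have hsingle : ∀ i, ∃ x : E3, ⟪x, n i⟫ < a i := fun i =>
    ⟨(a i - 1) • n i, by rw [real_inner_smul_left, hself i]; linarith⟩
  revert hS
  induction S using Finset.strongInduction with
  | _ S ih =>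
  intro hS
  by_cases hmin' : ∃ T ⊂ S, (⋂ i ∈ T, {x : E3 | ⟪x, n i⟫ < a i}) = ∅
  · obtain ⟨T, hTS, hT⟩ := hmin'
    exact ih T hTS hT
  push_neg at hmin'
  have hmin : ∀ T ⊂ S, (⋂ i ∈ T, {x : E3 | ⟪x, n i⟫ < a i}).Nonempty := hmin'
  -- S is nonempty
  have hSne : S.Nonempty := by
    rcases S.eq_empty_or_nonempty with h | h
    · exfalso; rw [h] at hS; simp at hS
    · exact h
  -- no direction v can strictly improve: step (A)
  have hA : ∀ v : E3, (∀ i ∈ S, ⟪v, n i⟫ ≤ 0) → (∀ i ∈ S, ⟪v, n i⟫ = 0) := by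
    intro v hv
    by_contra hstrict
    push_neg at hstrict
    obtain ⟨i₀, hi₀S, hi₀⟩ := hstrict
    set T : Finset ι := S.filter (fun i => ⟪v, n i⟫ = 0) with hTdef
    have hTS : T ⊂ S := Finset.filter_ssubset.mpr ⟨i₀, hi₀S, hi₀⟩
    obtain ⟨x, hx⟩ := hmin T hTS
    simp only [Set.mem_iInter, Set.mem_setOf_eq] at hx
    obtain ⟨M, hM⟩ := (S.image fun i => (a i - ⟪x, n i⟫) / ⟪v, n i⟫).exists_le
    have hmem : x + (M + 1) • v ∈ ⋂ i ∈ S, {x : E3 | ⟪x, n i⟫ < a i} := by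
      simp only [Set.mem_iInter, Set.mem_setOf_eq]
      intro i hi
      rw [inner_add_left, real_inner_smul_left]
      rcases eq_or_lt_of_le (hv i hi) with h0 | hlt
      · have hxT := hx i (Finset.mem_filter.mpr ⟨hi, h0⟩)
        rw [h0]; simpa using hxT
      · have hMi : (a i - ⟪x, n i⟫) / ⟪v, n i⟫ ≤ M := hM _ (Finset.mem_image_of_mem _ hi)
        have hne : ⟪v, n i⟫ ≠ 0 := ne_of_lt hlt
        have hcan : (a i - ⟪x, n i⟫) = ((a i - ⟪x, n i⟫) / ⟪v, n i⟫) * ⟪v, n i⟫ :=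
          (div_mul_cancel₀ _ hne).symm
        nlinarith [hlt, hMi]
    rw [hS] at hmem; exact hmem
  -- S has at least two elements
  have hcard2 : 2 ≤ S.card := by
    by_contra h
    push_neg at h
    have h1 : S.card = 1 := by
      have := Finset.card_pos.mpr hSne; omega
    obtain ⟨i, rfl⟩ := Finset.card_eq_one.mp h1
    obtain ⟨x, hx⟩ := hsingle i
    have hmem : x ∈ ⋂ j ∈ ({i} : Finset ι), {x : E3 | ⟪x, n j⟫ < a j} := by
      simp only [Finset.mem_singleton, Set.mem_iInter, Set.mem_setOf_eq]
      rintro j rfl; exact hx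
    rw [hS] at hmem; exact hmem
  by_cases hperp : ∃ u : E3, u ≠ 0 ∧ ∀ i ∈ S, ⟪u, n i⟫ = 0
  · obtain ⟨u, hu, hu0⟩ := hperp
    haveI : Fact (Module.finrank ℝ E3 = 2 + 1) := ⟨by simp [hfin]⟩
    have hWrank : Module.finrank ℝ ((ℝ ∙ u)ᗮ) = 2 := Submodule.finrank_orthogonal_span_singleton hu
    set F : ι → Set ((ℝ ∙ u)ᗮ) := fun i => {y | ⟪(y : E3), n i⟫ < a i} with hFdef
    have hFconv : ∀ i ∈ S, Convex ℝ (F i) := by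
      intro i _
      exact convex_halfSpace_lt
        ⟨fun y z => by rw [Submodule.coe_add, inner_add_left],
         fun r y => by rw [Submodule.coe_smul, real_inner_smul_left, smul_eq_mul]⟩ (a i)
    have hHelly : ∃ I ⊆ S, I.card ≤ Module.finrank ℝ ((ℝ ∙ u)ᗮ) + 1 ∧ (⋂ i ∈ I, F i) = ∅ := by
      by_contra hcon
      push_neg at hcon
      obtain ⟨y, hy⟩ := Convex.helly_theorem' (𝕜 := ℝ) hFconv
        (fun I hIS hIc => hcon I hIS hIc)
      simp only [Set.mem_iInter, hFdef, Set.mem_setOf_eq] at hy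
      have hmem : (y : E3) ∈ ⋂ i ∈ S, {x : E3 | ⟪x, n i⟫ < a i} := by
        simp only [Set.mem_iInter, Set.mem_setOf_eq]
        exact fun i hi => hy i hi
      rw [hS] at hmem; exact hmem
    obtain ⟨I, hIS, hIcard, hIempty⟩ := hHelly
    rw [hWrank] at hIcard
    have hIempty' : (⋂ i ∈ I, {x : E3 | ⟪x, n i⟫ < a i}) = ∅ := by
      rw [Set.eq_empty_iff_forall_notMem]
      intro x hx
      simp only [Set.mem_iInter, Set.mem_setOf_eq] at hx
      have hu2 : ⟪u, u⟫ ≠ (0 : ℝ) := fun h => hu (inner_self_eq_zero.mp h)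
      set y : E3 := x - (⟪x, u⟫ / ⟪u, u⟫) • u with hydef
      have hyW : y ∈ (ℝ ∙ u)ᗮ := by
        rw [Submodule.mem_orthogonal_singleton_iff_inner_right]
        have hyu : ⟪u, y⟫ = ⟪u, x⟫ - (⟪x, u⟫ / ⟪u, u⟫) * ⟪u, u⟫ := by
          rw [hydef, inner_sub_right, real_inner_smul_right]
        rw [hyu, div_mul_cancel₀ _ hu2, real_inner_comm]; ring
      have hyF : (⟨y, hyW⟩ : (ℝ ∙ u)ᗮ) ∈ ⋂ i ∈ I, F i := by
        simp only [Set.mem_iInter, hFdef, Set.mem_setOf_eq]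
        intro i hi
        have hiy : ⟪y, n i⟫ = ⟪x, n i⟫ - (⟪x, u⟫ / ⟪u, u⟫) * ⟪u, n i⟫ := by
          rw [hydef, inner_sub_left, real_inner_smul_left]
        rw [hiy, hu0 i (hIS hi)]
        simpa using hx i hi
      rw [hIempty] at hyF; exact hyF
    have hISeq : I = S := by
      by_contra hne
      exact Set.not_nonempty_empty
        (hIempty' ▸ hmin I (Finset.ssubset_iff_subset_ne.mpr ⟨hIS, hne⟩))
    subst hISeq
    have h23 : I.card = 2 ∨ I.card = 3 := by omega
    rcases h23 with h2 | h3
    · -- two faces: antiparallel or contradiction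
      obtain ⟨i, j, hij, rfl⟩ := Finset.card_eq_two.mp h2
      have hpair : ({x : E3 | ⟪x, n i⟫ < a i} ∩ {x : E3 | ⟪x, n j⟫ < a j}) = ∅ := by
        rw [Set.eq_empty_iff_forall_notMem]
        intro x hx
        have hmem : x ∈ ⋂ m ∈ ({i, j} : Finset ι), {x : E3 | ⟪x, n m⟫ < a m} := by
          simp only [Set.mem_iInter, Finset.mem_insert, Finset.mem_singleton, Set.mem_setOf_eq]
          rintro m (rfl | rfl)
          exacts [hx.1, hx.2]
        rw [hS] at hmem; exact hmem
      by_cases hanti : n j = -n i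
      · left
        refine ⟨i, j, hanti, ?_⟩
        by_contra hpos
        push_neg at hpos
        have hx1 : ⟪((a i - a j) / 2) • n i, n i⟫ < a i := by
          rw [real_inner_smul_left, hself i]; linarith
        have hx2 : ⟪((a i - a j) / 2) • n i, n j⟫ < a j := by
          rw [hanti, inner_neg_right, real_inner_smul_left, hself i]; linarith
        have hmem : ((a i - a j) / 2) • n i ∈
            ({x : E3 | ⟪x, n i⟫ < a i} ∩ {x : E3 | ⟪x, n j⟫ < a j}) := ⟨hx1, hx2⟩
        rw [hpair] at hmem; exact hmem
      · exfalso
        have hne : n i + n j ≠ 0 := fun h => hanti (eq_neg_of_add_eq_zero_right h)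
        have hd : (0 : ℝ) < 1 + ⟪n i, n j⟫ := by
          have hsq : ‖n i + n j‖ ^ 2 = 2 + 2 * ⟪n i, n j⟫ := by
            rw [norm_add_sq_real, hunit i, hunit j]; ring
          have hpos2 : 0 < ‖n i + n j‖ ^ 2 := by
            have := norm_pos_iff.mpr hne
            positivity
          nlinarith
        set d : ℝ := 1 + ⟪n i, n j⟫ with hddef
        set R : ℝ := max (-(a i) / d) (-(a j) / d) + 1 with hRdef
        have hRi : -(a i) / d < R := by
          have := le_max_left (-(a i) / d) (-(a j) / d); rw [hRdef]; linarith
        have hRj : -(a j) / d < R := by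
          have := le_max_right (-(a i) / d) (-(a j) / d); rw [hRdef]; linarith
        have hx1 : ⟪(-R) • (n i + n j), n i⟫ < a i := by
          have hdi : ⟪n i + n j, n i⟫ = d := by
            rw [inner_add_left, hself i, hddef]
            linarith [real_inner_comm (n i) (n j)]
          rw [real_inner_smul_left, hdi]
          have := (div_lt_iff₀ hd).mp hRi
          linarith
        have hx2 : ⟪(-R) • (n i + n j), n j⟫ < a j := by
          have hdj : ⟪n i + n j, n j⟫ = d := by
            rw [inner_add_left, hself j, hddef]; linarith
          rw [real_inner_smul_left, hdj]
          have := (div_lt_iff₀ hd).mp hRj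
          linarith
        have hmem : (-R) • (n i + n j) ∈
            ({x : E3 | ⟪x, n i⟫ < a i} ∩ {x : E3 | ⟪x, n j⟫ < a j}) := ⟨hx1, hx2⟩
        rw [hpair] at hmem; exact hmem
    · -- three faces: prism case
      obtain ⟨i, j, k, hij, hik, hjk, rfl⟩ := Finset.card_eq_three.mp h3
      right; left
      refine ⟨i, j, k, ⟨u, hu, hu0 i (by simp), hu0 j (by simp), hu0 k (by simp)⟩, ?_⟩
      rw [Set.eq_empty_iff_forall_notMem]
      intro x hx
      simp only [Set.mem_setOf_eq] at hx
      have hmem : x ∈ ⋂ m ∈ ({i, j, k} : Finset ι), {x : E3 | ⟪x, n m⟫ < a m} := by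
        simp only [Set.mem_iInter, Finset.mem_insert, Finset.mem_singleton, Set.mem_setOf_eq]
        rintro m (rfl | rfl | rfl)
        exacts [hx.1, hx.2.1, hx.2.2]
      rw [hS] at hmem; exact hmem
  · push_neg at hperp
    have hspan : ∀ v : E3, (∀ i ∈ S, ⟪v, n i⟫ = 0) → v = 0 := by
      intro v hv
      by_contra hv0
      obtain ⟨i, hiS, hi⟩ := hperp v hv0
      exact hi (hv i hiS)
    have hcone : ∀ v : E3, (∀ i ∈ S, ⟪v, n i⟫ ≤ 0) → v = 0 :=
      fun v hv => hspan v (hA v hv)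
    -- at least three faces
    have hcard3 : 3 ≤ S.card := by
      by_contra h
      push_neg at h
      have hVrank : Module.finrank ℝ (Submodule.span ℝ (↑(S.image n) : Set E3)) ≤ 2 := by
        calc Module.finrank ℝ (Submodule.span ℝ (↑(S.image n) : Set E3))
            ≤ (S.image n).card := finrank_span_finset_le_card (S.image n)
          _ ≤ S.card := Finset.card_image_le
          _ ≤ 2 := by omega
      have hVne : Submodule.span ℝ (↑(S.image n) : Set E3) ≠ ⊤ := by
        intro h'
        rw [h', finrank_top, hfin] at hVrank
        omega
      have hbot : (Submodule.span ℝ (↑(S.image n) : Set E3))ᗮ ≠ ⊥ :=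
        fun h' => hVne (Submodule.orthogonal_eq_bot_iff.mp h')
      obtain ⟨w, hwV, hw0⟩ := Submodule.exists_mem_ne_zero_of_ne_bot hbot
      obtain ⟨i, hiS, hi⟩ := hperp w hw0
      apply hi
      have hmemim : n i ∈ (↑(S.image n) : Set E3) := by
        simp only [Finset.coe_image, Set.mem_image, Finset.mem_coe]
        exact ⟨i, hiS, rfl⟩
      have hniV : n i ∈ Submodule.span ℝ (↑(S.image n) : Set E3) :=
        Submodule.subset_span hmemim
      rw [real_inner_comm]
      exact (Submodule.mem_orthogonal _ w).mp hwV (n i) hniV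
    -- Helly in dimension 3
    have hHelly : ∃ I ⊆ S, I.card ≤ Module.finrank ℝ E3 + 1 ∧
        (⋂ i ∈ I, {x : E3 | ⟪x, n i⟫ < a i}) = ∅ := by
      by_contra hcon
      push_neg at hcon
      have hconv : ∀ i ∈ S, Convex ℝ {x : E3 | ⟪x, n i⟫ < a i} := by
        intro i _
        exact convex_halfSpace_lt
          ⟨fun y z => by rw [inner_add_left],
           fun r y => by rw [real_inner_smul_left, smul_eq_mul]⟩ (a i)
      obtain ⟨y, hy⟩ := Convex.helly_theorem' (𝕜 := ℝ) hconv
        (fun I hIS hIc => hcon I hIS hIc)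
      rw [hS] at hy; exact hy
    obtain ⟨I, hIS, hIcard, hIempty⟩ := hHelly
    rw [hfin] at hIcard
    have hISeq : I = S := by
      by_contra hne
      exact Set.not_nonempty_empty
        (hIempty ▸ hmin I (Finset.ssubset_iff_subset_ne.mpr ⟨hIS, hne⟩))
    subst hISeq
    have h34 : I.card = 3 ∨ I.card = 4 := by omega
    rcases h34 with h3 | h4
    · -- three independent normals: contradiction
      exfalso
      obtain ⟨i, j, k, hij, hik, hjk, rfl⟩ := Finset.card_eq_three.mp h3
      set nv : Fin 3 → E3 := ![n i, n j, n k] with hnv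
      set Φ : E3 →ₗ[ℝ] (Fin 3 → ℝ) :=
        LinearMap.pi (fun m => (innerSL ℝ (nv m)).toLinearMap) with hΦ
      have hΦap : ∀ (x : E3) (l : Fin 3), Φ x l = ⟪nv l, x⟫ := fun x l => rfl
      have hinj : Function.Injective Φ := by
        rw [← LinearMap.ker_eq_bot, Submodule.eq_bot_iff]
        intro x hx
        rw [LinearMap.mem_ker] at hx
        apply hspan x
        intro m hm
        have h0 : ∀ l : Fin 3, ⟪nv l, x⟫ = 0 := by
          intro l
          rw [← hΦap x l, hx]; rfl
        simp only [Finset.mem_insert, Finset.mem_singleton] at hm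
        rcases hm with rfl | rfl | rfl
        · have := h0 0; rw [real_inner_comm]; simpa [hnv] using this
        · have := h0 1; rw [real_inner_comm]; simpa [hnv] using this
        · have := h0 2; rw [real_inner_comm]; simpa [hnv] using this
      have hsurj : Function.Surjective Φ :=
        (LinearMap.injective_iff_surjective_of_finrank_eq_finrank
          (by rw [hfin, Module.finrank_fin_fun])).mp hinj
      obtain ⟨x, hx⟩ := hsurj ![a i - 1, a j - 1, a k - 1]
      have hxl : ∀ l : Fin 3, ⟪nv l, x⟫ = ![a i - 1, a j - 1, a k - 1] l := by
        intro l; rw [← hΦap x l, hx]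
      have hmem : x ∈ ⋂ m ∈ ({i, j, k} : Finset ι), {x : E3 | ⟪x, n m⟫ < a m} := by
        simp only [Set.mem_iInter, Finset.mem_insert, Finset.mem_singleton, Set.mem_setOf_eq]
        rintro m (rfl | rfl | rfl)
        · have := hxl 0; rw [real_inner_comm]; simp only [hnv] at this
          simp only [Matrix.cons_val_zero] at this ⊢; rw [this]; linarith
        · have := hxl 1; rw [real_inner_comm]; simp only [hnv] at this
          simp only [Matrix.cons_val_one, Matrix.head_cons, Matrix.cons_val_zero] at this ⊢; rw [this]; linarith
        · have := hxl 2; rw [real_inner_comm]; simp only [hnv] at this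
          simp only [Matrix.cons_val_two, Matrix.tail_cons, Matrix.head_cons] at this ⊢
          rw [this]; linarith
      rw [hS] at hmem; exact hmem
    · -- four faces: tetrahedron case
      obtain ⟨i, T, hiT, hins, hT3⟩ := Finset.card_eq_succ.mp h4
      obtain ⟨j, k, l, hjk, hjl, hkl, rfl⟩ := Finset.card_eq_three.mp hT3
      right; right
      refine ⟨i, j, k, l, ?_, ?_⟩
      · ext v
        simp only [Set.mem_setOf_eq, Set.mem_singleton_iff]
        constructor
        · rintro ⟨h1, h2, h3, h4'⟩
          apply hcone v
          intro m hm
          rw [← hins] at hm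
          simp only [Finset.mem_insert, Finset.mem_singleton] at hm
          rcases hm with rfl | rfl | rfl | rfl
          exacts [h1, h2, h3, h4']
        · rintro rfl
          simp only [inner_zero_left, le_refl, and_self]
      · rw [Set.eq_empty_iff_forall_notMem]
        intro x hx
        simp only [Set.mem_setOf_eq] at hx
        have hmem : x ∈ ⋂ m ∈ I, {x : E3 | ⟪x, n m⟫ < a m} := by
          simp only [Set.mem_iInter, Set.mem_setOf_eq]
          intro m hm
          rw [← hins] at hm
          simp only [Finset.mem_insert, Finset.mem_singleton] at hm
          rcases hm with rfl | rfl | rfl | rfl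
          exacts [hx.1, hx.2.1, hx.2.2.1, hx.2.2.2]
        rw [hS] at hmem; exact hmem

lemma aux_hint {ι : Type*} [Fintype ι] (n : ι → E3) (hnn : ∀ i, n i ≠ 0) (b : ι → ℝ) :
    interior (⋂ i, {x : E3 | ⟪x, n i⟫ ≤ b i}) = ⋂ i, {x : E3 | ⟪x, n i⟫ < b i} := by
  rw [interior_iInter_of_finite]
  exact Set.iInter_congr fun i => aux_interior_halfspace (hnn i) (b i)


/-- Degeneration criterion for an evolving convex polyhedron in `ℝ³`: it degenerates
in finite time iff (1) two faces with antiparallel normals collapse, or (2) three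
faces whose normals are orthogonal to a common line form a collapsing triangular-prism
surface, or (3) four faces form a tetrahedron collapsing in finite time. -/
theorem polyhedron_degeneration_criterion
    {ι : Type*} [Fintype ι]
    (n : ι → EuclideanSpace ℝ (Fin 3)) (c s : ι → ℝ)
    (hunit : ∀ i, ‖n i‖ = 1)
    (hpoly : (interior (⋂ i, {x : EuclideanSpace ℝ (Fin 3) |
        ⟪x, n i⟫ ≤ c i + s i * 0})).Nonempty) :
    (∃ t : ℝ, 0 ≤ t ∧
        interior (⋂ i, {x : EuclideanSpace ℝ (Fin 3) | ⟪x, n i⟫ ≤ c i + s i * t}) = ∅) ↔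
      ((∃ f₁ f₂ : ι, n f₂ = -n f₁ ∧
          ∃ t : ℝ, 0 ≤ t ∧ (c f₁ + s f₁ * t) + (c f₂ + s f₂ * t) = 0) ∨
       (∃ f₁ f₂ f₃ : ι, (∃ u : EuclideanSpace ℝ (Fin 3), u ≠ 0 ∧
            ⟪u, n f₁⟫ = 0 ∧ ⟪u, n f₂⟫ = 0 ∧ ⟪u, n f₃⟫ = 0) ∧
          ∃ t : ℝ, 0 ≤ t ∧
            interior {x : EuclideanSpace ℝ (Fin 3) |
                ⟪x, n f₁⟫ ≤ c f₁ + s f₁ * t ∧ ⟪x, n f₂⟫ ≤ c f₂ + s f₂ * t ∧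
                ⟪x, n f₃⟫ ≤ c f₃ + s f₃ * t} = ∅) ∨
       (∃ f₁ f₂ f₃ f₄ : ι,
          -- the four supporting planes bound a tetrahedron
          {v : EuclideanSpace ℝ (Fin 3) | ⟪v, n f₁⟫ ≤ 0 ∧ ⟪v, n f₂⟫ ≤ 0 ∧
              ⟪v, n f₃⟫ ≤ 0 ∧ ⟪v, n f₄⟫ ≤ 0} = {0} ∧
          ∃ t : ℝ, 0 ≤ t ∧
            interior {x : EuclideanSpace ℝ (Fin 3) |
                ⟪x, n f₁⟫ ≤ c f₁ + s f₁ * t ∧ ⟪x, n f₂⟫ ≤ c f₂ + s f₂ * t ∧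
                ⟪x, n f₃⟫ ≤ c f₃ + s f₃ * t ∧ ⟪x, n f₄⟫ ≤ c f₄ + s f₄ * t} = ∅)) := by
  classical
  have hnn : ∀ i, n i ≠ 0 := fun i => by
    intro h; have := hunit i; rw [h, norm_zero] at this; norm_num at this
  have hint3 : ∀ (f₁ f₂ f₃ : ι) (b : ι → ℝ),
      interior {x : E3 | ⟪x, n f₁⟫ ≤ b f₁ ∧ ⟪x, n f₂⟫ ≤ b f₂ ∧ ⟪x, n f₃⟫ ≤ b f₃} =
      {x : E3 | ⟪x, n f₁⟫ < b f₁ ∧ ⟪x, n f₂⟫ < b f₂ ∧ ⟪x, n f₃⟫ < b f₃} := by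
    intro f₁ f₂ f₃ b
    have heq : {x : E3 | ⟪x, n f₁⟫ ≤ b f₁ ∧ ⟪x, n f₂⟫ ≤ b f₂ ∧ ⟪x, n f₃⟫ ≤ b f₃}
        = {x : E3 | ⟪x, n f₁⟫ ≤ b f₁} ∩ ({x : E3 | ⟪x, n f₂⟫ ≤ b f₂} ∩
          {x : E3 | ⟪x, n f₃⟫ ≤ b f₃}) := rfl
    rw [heq, interior_inter, interior_inter, aux_interior_halfspace (hnn f₁),
      aux_interior_halfspace (hnn f₂), aux_interior_halfspace (hnn f₃)]
    rfl
  have hint4 : ∀ (f₁ f₂ f₃ f₄ : ι) (b : ι → ℝ),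
      interior {x : E3 | ⟪x, n f₁⟫ ≤ b f₁ ∧ ⟪x, n f₂⟫ ≤ b f₂ ∧ ⟪x, n f₃⟫ ≤ b f₃ ∧
        ⟪x, n f₄⟫ ≤ b f₄} =
      {x : E3 | ⟪x, n f₁⟫ < b f₁ ∧ ⟪x, n f₂⟫ < b f₂ ∧ ⟪x, n f₃⟫ < b f₃ ∧
        ⟪x, n f₄⟫ < b f₄} := by
    intro f₁ f₂ f₃ f₄ b
    have heq : {x : E3 | ⟪x, n f₁⟫ ≤ b f₁ ∧ ⟪x, n f₂⟫ ≤ b f₂ ∧ ⟪x, n f₃⟫ ≤ b f₃ ∧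
          ⟪x, n f₄⟫ ≤ b f₄}
        = {x : E3 | ⟪x, n f₁⟫ ≤ b f₁} ∩ ({x : E3 | ⟪x, n f₂⟫ ≤ b f₂} ∩
          ({x : E3 | ⟪x, n f₃⟫ ≤ b f₃} ∩ {x : E3 | ⟪x, n f₄⟫ ≤ b f₄})) := rfl
    rw [heq, interior_inter, interior_inter, interior_inter,
      aux_interior_halfspace (hnn f₁), aux_interior_halfspace (hnn f₂),
      aux_interior_halfspace (hnn f₃), aux_interior_halfspace (hnn f₄)]
    rfl
  constructor
  · rintro ⟨t, ht0, hdeg⟩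
    rw [aux_hint n hnn] at hdeg
    have hS : (⋂ i ∈ (Finset.univ : Finset ι), {x : E3 | ⟪x, n i⟫ < c i + s i * t}) = ∅ := by
      rw [← hdeg]; ext x; simp
    rcases aux_key n (fun i => c i + s i * t) hunit Finset.univ hS with h1 | h2 | h3
    · obtain ⟨f₁, f₂, hanti, hsum⟩ := h1
      left
      refine ⟨f₁, f₂, hanti, ?_⟩
      obtain ⟨x, hx⟩ := hpoly
      rw [aux_hint n hnn] at hx
      simp only [Set.mem_iInter, Set.mem_setOf_eq] at hx
      have h1' := hx f₁
      have h2' := hx f₂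
      rw [hanti, inner_neg_right] at h2'
      have h0pos : 0 < (c f₁ + s f₁ * 0) + (c f₂ + s f₂ * 0) := by linarith
      have hgc : ContinuousOn (fun τ : ℝ => (c f₁ + s f₁ * τ) + (c f₂ + s f₂ * τ))
        (Set.Icc 0 t) := by fun_prop
      have hmem : (0 : ℝ) ∈ Set.Icc ((c f₁ + s f₁ * t) + (c f₂ + s f₂ * t))
          ((c f₁ + s f₁ * 0) + (c f₂ + s f₂ * 0)) := ⟨hsum, h0pos.le⟩
      obtain ⟨t', ht', hgt'⟩ := intermediate_value_Icc' ht0 hgc hmem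
      exact ⟨t', ht'.1, hgt'⟩
    · obtain ⟨f₁, f₂, f₃, hu, hempty⟩ := h2
      right; left
      refine ⟨f₁, f₂, f₃, hu, t, ht0, ?_⟩
      rw [hint3 f₁ f₂ f₃ (fun i => c i + s i * t)]
      exact hempty
    · obtain ⟨f₁, f₂, f₃, f₄, hcone, hempty⟩ := h3
      right; right
      refine ⟨f₁, f₂, f₃, f₄, hcone, t, ht0, ?_⟩
      rw [hint4 f₁ f₂ f₃ f₄ (fun i => c i + s i * t)]
      exact hempty
  · rintro (⟨f₁, f₂, hanti, t, ht0, hsum⟩ | ⟨f₁, f₂, f₃, hu, t, ht0, hempty⟩ |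
      ⟨f₁, f₂, f₃, f₄, hcone, t, ht0, hempty⟩)
    · refine ⟨t, ht0, ?_⟩
      rw [aux_hint n hnn, Set.eq_empty_iff_forall_notMem]
      intro x hx
      simp only [Set.mem_iInter, Set.mem_setOf_eq] at hx
      have h1 := hx f₁
      have h2 := hx f₂
      rw [hanti, inner_neg_right] at h2
      linarith
    · refine ⟨t, ht0, ?_⟩
      have hsub : (⋂ i, {x : E3 | ⟪x, n i⟫ ≤ c i + s i * t}) ⊆
          {x : E3 | ⟪x, n f₁⟫ ≤ c f₁ + s f₁ * t ∧ ⟪x, n f₂⟫ ≤ c f₂ + s f₂ * t ∧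
            ⟪x, n f₃⟫ ≤ c f₃ + s f₃ * t} := by
        intro x hx
        simp only [Set.mem_iInter, Set.mem_setOf_eq] at hx ⊢
        exact ⟨hx f₁, hx f₂, hx f₃⟩
      have hmono := interior_mono hsub
      rw [hempty] at hmono
      exact Set.subset_empty_iff.mp hmono
    · refine ⟨t, ht0, ?_⟩
      have hsub : (⋂ i, {x : E3 | ⟪x, n i⟫ ≤ c i + s i * t}) ⊆
          {x : E3 | ⟪x, n f₁⟫ ≤ c f₁ + s f₁ * t ∧ ⟪x, n f₂⟫ ≤ c f₂ + s f₂ * t ∧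
            ⟪x, n f₃⟫ ≤ c f₃ + s f₃ * t ∧ ⟪x, n f₄⟫ ≤ c f₄ + s f₄ * t} := by
        intro x hx
        simp only [Set.mem_iInter, Set.mem_setOf_eq] at hx ⊢
        exact ⟨hx f₁, hx f₂, hx f₃, hx f₄⟩
      have hmono := interior_mono hsub
      rw [hempty] at hmono
      exact Set.subset_empty_iff.mp hmono
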